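/- In the root system D_4 realized in ℝ^4, the four roots λ_1 − λ_2, λ_1 + λ_2, λ_3 − λ_4, λ_3 + λ_4 are pairwise M-equivalent: for every root γ of D_4 and any two roots α, β in this set, 2⟨γ,α⟩/⟨γ,γ⟩ ≡ 2⟨γ,β⟩/⟨γ,γ⟩ (mod 2). -/

import Mathlib

noncomputable section

/-- Standard dot product on `ℝⁿ`. -/
def dotp {n : ℕ} (x y : Fin n → ℝ) : ℝ := ∑ i, x i * y i

/-- Killing number `2⟨γ,α⟩/⟨γ,γ⟩`. -/
def kil {n : ℕ} (γ α : Fin n → ℝ) : ℝ := 2 * dotp γ α / dotp γ γ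

/-- Standard basis vector `λ_a` of `ℝⁿ`. -/
def lamv {n : ℕ} (a : Fin n) : Fin n → ℝ := fun i => if i = a then 1 else 0

/-- Roots of `D_l` in `ℝ^l`: the vectors `±λ_a ± λ_b`, `a ≠ b`. -/
def rootsD (n : ℕ) : Set (Fin n → ℝ) :=
  {v | ∃ a b : Fin n, a ≠ b ∧
        (v = lamv a + lamv b ∨ v = lamv a - lamv b ∨ v = -lamv a - lamv b)}

lemma dotp_lamv {n : ℕ} (γ : Fin n → ℝ) (a : Fin n) : dotp γ (lamv a) = γ a := by
  simp [dotp, lamv, mul_ite, Finset.sum_ite_eq']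

lemma dotp_lamv_sub {n : ℕ} (γ : Fin n → ℝ) (a b : Fin n) :
    dotp γ (lamv a - lamv b) = γ a - γ b := by
  simp [dotp, Pi.sub_apply, mul_sub, Finset.sum_sub_distrib, ← dotp_lamv γ a, ← dotp_lamv γ b]

lemma dotp_lamv_add {n : ℕ} (γ : Fin n → ℝ) (a b : Fin n) :
    dotp γ (lamv a + lamv b) = γ a + γ b := by
  simp [dotp, Pi.add_apply, mul_add, Finset.sum_add_distrib, ← dotp_lamv γ a, ← dotp_lamv γ b]

lemma dotp_lamv_neg {n : ℕ} (γ : Fin n → ℝ) (a b : Fin n) :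
    dotp γ (-lamv a - lamv b) = -γ a - γ b := by
  simp [dotp, Pi.sub_apply, Pi.neg_apply, mul_sub, mul_neg, Finset.sum_sub_distrib,
    ← dotp_lamv γ a, ← dotp_lamv γ b]

lemma kil_sub (γ : Fin 4 → ℝ) (h2 : dotp γ γ = 2) (a b : Fin 4) :
    kil γ (lamv a - lamv b) = γ a - γ b := by
  rw [kil, dotp_lamv_sub, h2]; ring

lemma kil_add (γ : Fin 4 → ℝ) (h2 : dotp γ γ = 2) (a b : Fin 4) :
    kil γ (lamv a + lamv b) = γ a + γ b := by
  rw [kil, dotp_lamv_add, h2]; ring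

lemma main_aux (γ : Fin 4 → ℝ) (c : Fin 4 → ℤ) (hci : ∀ i, γ i = c i)
    (h2 : dotp γ γ = 2) (s : ℤ) (hs : c 0 + c 1 + c 2 + c 3 = 2 * s) :
    ∀ α ∈ ({lamv 0 - lamv 1, lamv 0 + lamv 1, lamv 2 - lamv 3, lamv 2 + lamv 3} :
        Set (Fin 4 → ℝ)),
      ∀ β ∈ ({lamv 0 - lamv 1, lamv 0 + lamv 1, lamv 2 - lamv 3, lamv 2 + lamv 3} :
        Set (Fin 4 → ℝ)),
      ∃ k : ℤ, kil γ α - kil γ β = 2 * k := by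
  have hsr : (c 0 : ℝ) + c 1 + c 2 + c 3 = 2 * s := by exact_mod_cast hs
  intro α hα β hβ
  simp only [Set.mem_insert_iff, Set.mem_singleton_iff] at hα hβ
  rcases hα with rfl | rfl | rfl | rfl <;> rcases hβ with rfl | rfl | rfl | rfl <;>
    simp only [kil_sub γ h2, kil_add γ h2, hci 0, hci 1, hci 2, hci 3] <;>
    first
      | (refine ⟨0, ?_⟩; push_cast; ring1)
      | (refine ⟨-c 1, ?_⟩; push_cast; ring1)
      | (refine ⟨c 1, ?_⟩; push_cast; ring1)
      | (refine ⟨-c 3, ?_⟩; push_cast; ring1)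
      | (refine ⟨c 3, ?_⟩; push_cast; ring1)
      | (refine ⟨s - c 1 - c 2 - c 3, ?_⟩; push_cast; linarith)
      | (refine ⟨-(s - c 1 - c 2 - c 3), ?_⟩; push_cast; linarith)
      | (refine ⟨s - c 1 - c 2, ?_⟩; push_cast; linarith)
      | (refine ⟨-(s - c 1 - c 2), ?_⟩; push_cast; linarith)
      | (refine ⟨s - c 2, ?_⟩; push_cast; linarith)
      | (refine ⟨-(s - c 2), ?_⟩; push_cast; linarith)
      | (refine ⟨s - c 2 - c 3, ?_⟩; push_cast; linarith)
      | (refine ⟨-(s - c 2 - c 3), ?_⟩; push_cast; linarith)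

/-- In `D_4`, the four roots `λ_1 − λ_2, λ_1 + λ_2, λ_3 − λ_4, λ_3 + λ_4` are
pairwise M-equivalent. (0-based indices.) -/
theorem stmt11 :
    ∀ α ∈ ({lamv 0 - lamv 1, lamv 0 + lamv 1, lamv 2 - lamv 3, lamv 2 + lamv 3} :
        Set (Fin 4 → ℝ)),
      ∀ β ∈ ({lamv 0 - lamv 1, lamv 0 + lamv 1, lamv 2 - lamv 3, lamv 2 + lamv 3} :
        Set (Fin 4 → ℝ)),
      ∀ γ ∈ rootsD 4, ∃ k : ℤ, kil γ α - kil γ β = 2 * k := by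
  intro α hα β hβ γ hγ
  obtain ⟨a, b, hab, h⟩ := hγ
  rcases h with rfl | rfl | rfl
  · refine main_aux _ (fun i => (if i = a then 1 else 0) + (if i = b then 1 else 0)) ?_ ?_ 1 ?_
      α hα β hβ
    · intro i; simp only [Pi.add_apply, lamv]; split_ifs <;> norm_num
    · rw [dotp_lamv_add]
      simp [Pi.add_apply, lamv, hab, hab.symm]; norm_num
    · skip
      fin_cases a <;> fin_cases b <;> decide
  · refine main_aux _ (fun i => (if i = a then 1 else 0) - (if i = b then 1 else 0)) ?_ ?_ 0 ?_
      α hα β hβ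
    · intro i; simp only [Pi.sub_apply, lamv]; split_ifs <;> norm_num
    · rw [dotp_lamv_sub]
      simp [Pi.sub_apply, lamv, hab, hab.symm]; norm_num
    · skip
      fin_cases a <;> fin_cases b <;> decide
  · refine main_aux _ (fun i => -(if i = a then 1 else 0) - (if i = b then 1 else 0)) ?_ ?_ (-1) ?_
      α hα β hβ
    · intro i; simp only [Pi.sub_apply, Pi.neg_apply, lamv]; split_ifs <;> norm_num
    · rw [dotp_lamv_neg]
      simp [Pi.sub_apply, Pi.neg_apply, lamv, hab, hab.symm]; norm_num
    · skip
      fin_cases a <;> fin_cases b <;> decide
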